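/- Let R > 0, 0 < R' ≤ R, and φ ∈ H¹(B_{2R}) on concentric Euclidean balls in ℝᵈ. Define the mollification (φ)_{R'}(x) := ⨏_{B_{R'}(x)} φ for x ∈ B_R. Then there is a dimensional constant C = C(d) with (1/R²) ⨏_{B_R} |φ − (φ)_{R'}|² ≤ C (R'/R)² ⨏_{B_{2R}} |∇φ|². -/

import Mathlib

open MeasureTheory

open Metric Set ENNReal in
private lemma stmt18_grad_norm (d : ℕ) (φ : EuclideanSpace ℝ (Fin d) → ℝ)
    (p : EuclideanSpace ℝ (Fin d)) :
    ‖gradient φ p‖ = ‖fderiv ℝ φ p‖ := by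
  rw [show gradient φ p = (InnerProductSpace.toDual ℝ _).symm (fderiv ℝ φ p) from rfl]
  exact LinearIsometryEquiv.norm_map _ _

open Metric Set ENNReal in
private lemma stmt18_grad_meas (d : ℕ) (φ : EuclideanSpace ℝ (Fin d) → ℝ) :
    Measurable (gradient φ) :=
  ((InnerProductSpace.toDual ℝ _).symm.continuous.measurable).comp (measurable_fderiv ℝ φ)

open Metric Set ENNReal in
private lemma stmt18_shift_le (d : ℕ) (f : EuclideanSpace ℝ (Fin d) → ℝ≥0∞) (hf : Measurable f)
    (R : ℝ) (v : EuclideanSpace ℝ (Fin d)) (hv : ‖v‖ ≤ R) :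
    ∫⁻ x in ball (0 : EuclideanSpace ℝ (Fin d)) R, f (x + v) ≤
      ∫⁻ x in ball (0 : EuclideanSpace ℝ (Fin d)) (2*R), f x := by
  have h1 : ∫⁻ x in ball (0 : EuclideanSpace ℝ (Fin d)) R, f (x + v)
      = ∫⁻ x in ball v R, f x := by
    have hmp := measurePreserving_add_right (volume : Measure (EuclideanSpace ℝ (Fin d))) v
    have hemb : MeasurableEmbedding (fun x : EuclideanSpace ℝ (Fin d) => x + v) :=
      (MeasurableEquiv.addRight v).measurableEmbedding
    have h := hmp.setLIntegral_comp_emb hemb f (ball 0 R)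
    rw [h]
    congr 1
    ext y
    simp [mem_ball, dist_eq_norm]
  rw [h1]
  apply lintegral_mono_set
  apply ball_subset_ball'
  rw [dist_zero_right]
  linarith

open Metric Set ENNReal in
private lemma stmt18_trans_int (d : ℕ) (φ : EuclideanSpace ℝ (Fin d) → ℝ)
    (R' : ℝ) (x : EuclideanSpace ℝ (Fin d)) :
    ∫ y in ball x R', φ y = ∫ z in ball (0 : EuclideanSpace ℝ (Fin d)) R', φ (x + z) := by
  have hmp := measurePreserving_add_left (volume : Measure (EuclideanSpace ℝ (Fin d))) x
  have hemb : MeasurableEmbedding (fun z : EuclideanSpace ℝ (Fin d) => x + z) :=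
    (MeasurableEquiv.addLeft x).measurableEmbedding
  have h := hmp.setIntegral_preimage_emb hemb φ (ball x R')
  rw [← h]
  congr 1
  ext z
  simp [mem_ball, dist_eq_norm]

open Metric Set ENNReal in
private lemma stmt18_core (d : ℕ) (f : EuclideanSpace ℝ (Fin d) → ℝ≥0∞) (hf : Measurable f)
    (R R' : ℝ) (hR' : 0 < R') (hR : R' ≤ R)
    (hshift : ∀ v : EuclideanSpace ℝ (Fin d), ‖v‖ ≤ R →
      ∫⁻ x in ball (0 : EuclideanSpace ℝ (Fin d)) R, f (x + v) ≤
        ∫⁻ x in ball (0 : EuclideanSpace ℝ (Fin d)) (2*R), f x) :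
    ∫⁻ x in ball (0 : EuclideanSpace ℝ (Fin d)) R, ∫⁻ z in ball (0 : EuclideanSpace ℝ (Fin d)) R',
        ∫⁻ t in Ioo (0:ℝ) 1, f (x + t • z) ≤
      volume (ball (0 : EuclideanSpace ℝ (Fin d)) R') *
        ∫⁻ x in ball (0 : EuclideanSpace ℝ (Fin d)) (2*R), f x := by
  have hmeas3 : Measurable (fun p : (EuclideanSpace ℝ (Fin d) × EuclideanSpace ℝ (Fin d)) × ℝ =>
      f (p.1.1 + p.2 • p.1.2)) := by
    have : Continuous (fun p : (EuclideanSpace ℝ (Fin d) × EuclideanSpace ℝ (Fin d)) × ℝ =>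
        p.1.1 + p.2 • p.1.2) := by fun_prop
    exact hf.comp this.measurable
  have hmeas2 : Measurable (fun p : EuclideanSpace ℝ (Fin d) × EuclideanSpace ℝ (Fin d) =>
      ∫⁻ t in Ioo (0:ℝ) 1, f (p.1 + t • p.2)) := by
    exact Measurable.lintegral_prod_right' hmeas3
  have hswap1 : ∫⁻ x in ball (0 : EuclideanSpace ℝ (Fin d)) R,
        ∫⁻ z in ball (0 : EuclideanSpace ℝ (Fin d)) R',
        ∫⁻ t in Ioo (0:ℝ) 1, f (x + t • z)
      = ∫⁻ z in ball (0 : EuclideanSpace ℝ (Fin d)) R',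
        ∫⁻ x in ball (0 : EuclideanSpace ℝ (Fin d)) R,
        ∫⁻ t in Ioo (0:ℝ) 1, f (x + t • z) := by
    exact lintegral_lintegral_swap hmeas2.aemeasurable
  rw [hswap1]
  have hinner : ∀ z ∈ ball (0 : EuclideanSpace ℝ (Fin d)) R',
      ∫⁻ x in ball (0 : EuclideanSpace ℝ (Fin d)) R, ∫⁻ t in Ioo (0:ℝ) 1, f (x + t • z) ≤
        ∫⁻ x in ball (0 : EuclideanSpace ℝ (Fin d)) (2*R), f x := by
    intro z hz
    have hmeas2' : Measurable (fun p : EuclideanSpace ℝ (Fin d) × ℝ => f (p.1 + p.2 • z)) := by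
      have : Continuous (fun p : EuclideanSpace ℝ (Fin d) × ℝ => p.1 + p.2 • z) := by fun_prop
      exact hf.comp this.measurable
    have hswap2 : ∫⁻ x in ball (0 : EuclideanSpace ℝ (Fin d)) R,
          ∫⁻ t in Ioo (0:ℝ) 1, f (x + t • z)
        = ∫⁻ t in Ioo (0:ℝ) 1, ∫⁻ x in ball (0 : EuclideanSpace ℝ (Fin d)) R, f (x + t • z) :=
      lintegral_lintegral_swap hmeas2'.aemeasurable
    rw [hswap2]
    calc ∫⁻ t in Ioo (0:ℝ) 1, ∫⁻ x in ball (0 : EuclideanSpace ℝ (Fin d)) R, f (x + t • z)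
        ≤ ∫⁻ _t in Ioo (0:ℝ) 1, ∫⁻ x in ball (0 : EuclideanSpace ℝ (Fin d)) (2*R), f x := by
          apply setLIntegral_mono' measurableSet_Ioo
          intro t ht
          apply hshift
          rw [norm_smul]
          have hz' : ‖z‖ < R' := by simpa [mem_ball, dist_eq_norm] using hz
          have : |t| ≤ 1 := by rw [abs_le]; constructor <;> [linarith [ht.1]; linarith [ht.2]]
          calc ‖(t:ℝ)‖ * ‖z‖ ≤ 1 * ‖z‖ := by
                apply mul_le_mul_of_nonneg_right _ (norm_nonneg z)
                simpa [Real.norm_eq_abs] using this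
            _ ≤ R := by simpa using le_trans (le_of_lt hz') hR
      _ = ∫⁻ x in ball (0 : EuclideanSpace ℝ (Fin d)) (2*R), f x := by
          rw [setLIntegral_const]
          simp [Real.volume_Ioo]
  calc ∫⁻ z in ball (0 : EuclideanSpace ℝ (Fin d)) R',
        ∫⁻ x in ball (0 : EuclideanSpace ℝ (Fin d)) R, ∫⁻ t in Ioo (0:ℝ) 1, f (x + t • z)
      ≤ ∫⁻ _z in ball (0 : EuclideanSpace ℝ (Fin d)) R',
          ∫⁻ x in ball (0 : EuclideanSpace ℝ (Fin d)) (2*R), f x :=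
        setLIntegral_mono' measurableSet_ball hinner
    _ = volume (ball (0 : EuclideanSpace ℝ (Fin d)) R') *
          ∫⁻ x in ball (0 : EuclideanSpace ℝ (Fin d)) (2*R), f x := by
        rw [setLIntegral_const]; ring

open Metric Set ENNReal in
private lemma stmt18_ptwise (d : ℕ) (φ : EuclideanSpace ℝ (Fin d) → ℝ) (hφ : Differentiable ℝ φ)
    (x z : EuclideanSpace ℝ (Fin d)) :
    ENNReal.ofReal ((φ (x + z) - φ x)^2) ≤
      ENNReal.ofReal (‖z‖^2) *
        ∫⁻ t in Ioo (0:ℝ) 1, ENNReal.ofReal (‖gradient φ (x + t • z)‖^2) := by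
  set G : ℝ → ℝ := fun t => ‖gradient φ (x + t • z)‖^2 with hG
  have hpath : Measurable (fun t : ℝ => x + t • z) := by
    have : Continuous (fun t : ℝ => x + t • z) := by fun_prop
    exact this.measurable
  have hGmeas : Measurable G := by
    have : Measurable (fun p => ‖gradient φ p‖^2) := ((stmt18_grad_meas d φ).norm).pow_const 2
    exact this.comp hpath
  by_cases hfin : (∫⁻ t in Ioo (0:ℝ) 1, ENNReal.ofReal (G t)) = ⊤
  · rcases eq_or_ne z 0 with rfl | hz
    · simp
    · rw [hfin, ENNReal.mul_top]
      · exact le_top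
      · simp only [ne_eq, ENNReal.ofReal_eq_zero, not_le]
        have h0 : 0 < ‖z‖ := norm_pos_iff.mpr hz
        positivity
  · -- G integrable on Ioo 0 1
    have hGnn : ∀ t, 0 ≤ G t := fun t => by positivity
    have hGint : IntegrableOn G (Ioo (0:ℝ) 1) := by
      refine ⟨hGmeas.aestronglyMeasurable, ?_⟩
      rw [hasFiniteIntegral_iff_ofReal (Filter.Eventually.of_forall hGnn)]
      exact lt_top_iff_ne_top.2 hfin
    set g' : ℝ → ℝ := fun t => fderiv ℝ φ (x + t • z) z with hg'
    have hg'meas : Measurable g' := (measurable_fderiv_apply_const ℝ φ z).comp hpath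
    have hg'bd : ∀ t, |g' t| ≤ ‖z‖ * ‖gradient φ (x + t • z)‖ := by
      intro t
      rw [stmt18_grad_norm]
      calc |g' t| = ‖fderiv ℝ φ (x + t • z) z‖ := (Real.norm_eq_abs _).symm
        _ ≤ ‖fderiv ℝ φ (x + t • z)‖ * ‖z‖ := (fderiv ℝ φ (x + t • z)).le_opNorm z
        _ = ‖z‖ * ‖fderiv ℝ φ (x + t • z)‖ := mul_comm _ _
    have hg'int : IntegrableOn g' (Ioo (0:ℝ) 1) := by
      apply Integrable.mono' ((integrable_const (‖z‖ * 1)).add (hGint.const_mul ‖z‖))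
      · exact hg'meas.aestronglyMeasurable
      · apply Filter.Eventually.of_forall
        intro t
        rw [Real.norm_eq_abs]
        calc |g' t| ≤ ‖z‖ * ‖gradient φ (x + t • z)‖ := hg'bd t
          _ ≤ ‖z‖ * (1 + G t) := by
              apply mul_le_mul_of_nonneg_left _ (norm_nonneg z)
              show ‖gradient φ (x + t • z)‖ ≤ 1 + ‖gradient φ (x + t • z)‖^2
              nlinarith [sq_nonneg (‖gradient φ (x + t • z)‖ - 1)]
          _ = ‖z‖ * 1 + ‖z‖ * G t := by ring
    have hsqint : IntegrableOn (fun t => (g' t)^2) (Ioo (0:ℝ) 1) := by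
      apply Integrable.mono' (hGint.const_mul (‖z‖^2))
      · exact (hg'meas.pow_const 2).aestronglyMeasurable
      · apply Filter.Eventually.of_forall
        intro t
        show |g' t ^ 2| ≤ ‖z‖ ^ 2 * ‖gradient φ (x + t • z)‖^2
        rw [abs_of_nonneg (sq_nonneg _), ← sq_abs]
        calc |g' t|^2 ≤ (‖z‖ * ‖gradient φ (x + t • z)‖)^2 := by
              apply pow_le_pow_left₀ (abs_nonneg _) (hg'bd t)
          _ = ‖z‖ ^ 2 * ‖gradient φ (x + t • z)‖^2 := by ring
    have hsqbd : ∀ t, (g' t)^2 ≤ ‖z‖^2 * G t := by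
      intro t
      show (g' t)^2 ≤ ‖z‖ ^ 2 * ‖gradient φ (x + t • z)‖^2
      rw [← sq_abs]
      calc |g' t|^2 ≤ (‖z‖ * ‖gradient φ (x + t • z)‖)^2 :=
            pow_le_pow_left₀ (abs_nonneg _) (hg'bd t) 2
        _ = ‖z‖ ^ 2 * ‖gradient φ (x + t • z)‖^2 := by ring
    have hftc : φ (x + z) - φ x = ∫ t in (0:ℝ)..1, g' t := by
      have hderiv : ∀ t ∈ uIcc (0:ℝ) 1, HasDerivAt (fun s : ℝ => φ (x + s • z)) (g' t) t := by
        intro t _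
        have hc : HasDerivAt (fun s : ℝ => x + s • z) z t := by
          simpa using ((hasDerivAt_id t).smul_const z).const_add x
        exact (hφ (x + t • z)).hasFDerivAt.comp_hasDerivAt t hc
      have hii : IntervalIntegrable g' volume 0 1 := by
        rw [intervalIntegrable_iff_integrableOn_Ioo_of_le zero_le_one]
        exact hg'int
      rw [intervalIntegral.integral_eq_sub_of_hasDerivAt hderiv hii]
      simp
    haveI hprob : IsProbabilityMeasure (volume.restrict (Ioc (0:ℝ) 1)) := by
      constructor
      simp [Real.volume_Ioc]
    have hconv : ConvexOn ℝ univ (fun y : ℝ => y^2) := Even.convexOn_pow even_two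
    have hg'intIoc : IntegrableOn g' (Ioc (0:ℝ) 1) :=
      (integrableOn_Ioc_iff_integrableOn_Ioo).2 hg'int
    have hsqIoc : IntegrableOn (fun t => (g' t)^2) (Ioc (0:ℝ) 1) :=
      (integrableOn_Ioc_iff_integrableOn_Ioo).2 hsqint
    have hJ : (∫ t in Ioc (0:ℝ) 1, g' t)^2 ≤ ∫ t in Ioc (0:ℝ) 1, (g' t)^2 :=
      hconv.map_integral_le (continuous_pow 2).continuousOn isClosed_univ
        (Filter.Eventually.of_forall fun _ => mem_univ _) hg'intIoc hsqIoc
    have h1 : (φ (x + z) - φ x)^2 ≤ ‖z‖^2 * ∫ t in Ioo (0:ℝ) 1, G t := by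
      rw [hftc, intervalIntegral.integral_of_le zero_le_one]
      calc (∫ t in Ioc (0:ℝ) 1, g' t)^2 ≤ ∫ t in Ioc (0:ℝ) 1, (g' t)^2 := hJ
        _ = ∫ t in Ioo (0:ℝ) 1, (g' t)^2 := integral_Ioc_eq_integral_Ioo
        _ ≤ ∫ t in Ioo (0:ℝ) 1, ‖z‖^2 * G t := by
            apply setIntegral_mono_on hsqint (hGint.const_mul _) measurableSet_Ioo
            intro t _
            exact hsqbd t
        _ = ‖z‖^2 * ∫ t in Ioo (0:ℝ) 1, G t := by rw [MeasureTheory.integral_const_mul]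
    calc ENNReal.ofReal ((φ (x + z) - φ x)^2)
        ≤ ENNReal.ofReal (‖z‖^2 * ∫ t in Ioo (0:ℝ) 1, G t) := ENNReal.ofReal_le_ofReal h1
      _ = ENNReal.ofReal (‖z‖^2) * ENNReal.ofReal (∫ t in Ioo (0:ℝ) 1, G t) :=
          ENNReal.ofReal_mul (by positivity)
      _ = _ := by
          rw [ofReal_integral_eq_lintegral_ofReal hGint (Filter.Eventually.of_forall hGnn)]

open Metric Set ENNReal in
private lemma stmt18_xstep (d : ℕ) (φ : EuclideanSpace ℝ (Fin d) → ℝ) (hφ : Differentiable ℝ φ)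
    (R' : ℝ) (hR' : 0 < R') (x : EuclideanSpace ℝ (Fin d))
    (hpt : ∀ z : EuclideanSpace ℝ (Fin d),
      ENNReal.ofReal ((φ (x + z) - φ x)^2) ≤
        ENNReal.ofReal (‖z‖^2) *
          ∫⁻ t in Ioo (0:ℝ) 1, ENNReal.ofReal (‖gradient φ (x + t • z)‖^2)) :
    ENNReal.ofReal ((φ x - ⨍ y in ball x R', φ y)^2) ≤
      (volume (ball (0 : EuclideanSpace ℝ (Fin d)) R'))⁻¹ * ENNReal.ofReal (R'^2) *
        ∫⁻ z in ball (0 : EuclideanSpace ℝ (Fin d)) R',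
          ∫⁻ t in Ioo (0:ℝ) 1, ENNReal.ofReal (‖gradient φ (x + t • z)‖^2) := by
  have hvolpos : 0 < volume (ball (0 : EuclideanSpace ℝ (Fin d)) R') :=
    measure_ball_pos _ _ hR'
  have hvolfin : volume (ball (0 : EuclideanSpace ℝ (Fin d)) R') < ⊤ := measure_ball_lt_top
  set v := volume (ball (0 : EuclideanSpace ℝ (Fin d)) R') with hv
  have hvtR : (0:ℝ) < v.toReal := ENNReal.toReal_pos hvolpos.ne' hvolfin.ne
  -- translate the average
  have htrans : ∫ y in ball x R', φ y = ∫ z in ball (0 : EuclideanSpace ℝ (Fin d)) R', φ (x + z) := by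
    have hmp := measurePreserving_add_left (volume : Measure (EuclideanSpace ℝ (Fin d))) x
    have hemb : MeasurableEmbedding (fun z : EuclideanSpace ℝ (Fin d) => x + z) :=
      (MeasurableEquiv.addLeft x).measurableEmbedding
    have h := hmp.setIntegral_preimage_emb hemb φ (ball x R')
    rw [← h]
    congr 1
    ext z
    simp [mem_ball, dist_eq_norm]
  have hvol_center : volume (ball x R') = v := by rw [hv, Measure.addHaar_ball_center]
  set F : EuclideanSpace ℝ (Fin d) → ℝ := fun z => φ x - φ (x + z) with hF
  have hFcont : Continuous F := by
    have : Continuous (fun z : EuclideanSpace ℝ (Fin d) => φ (x + z)) :=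
      hφ.continuous.comp (continuous_const.add continuous_id)
    exact continuous_const.sub this
  have hFint : IntegrableOn F (ball (0 : EuclideanSpace ℝ (Fin d)) R') :=
    (hFcont.continuousOn.integrableOn_compact (isCompact_closedBall _ _)).mono_set
      ball_subset_closedBall
  have hF2int : IntegrableOn (fun z => (F z)^2) (ball (0 : EuclideanSpace ℝ (Fin d)) R') :=
    ((hFcont.pow 2).continuousOn.integrableOn_compact (isCompact_closedBall _ _)).mono_set
      ball_subset_closedBall
  -- φ x - avg = average of F
  have havg : φ x - ⨍ y in ball x R', φ y
      = ⨍ z in ball (0 : EuclideanSpace ℝ (Fin d)) R', F z := by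
    rw [setAverage_eq, setAverage_eq, htrans, measureReal_def, measureReal_def, hvol_center]
    rw [integral_sub (integrableOn_const (C := φ x) hvolfin.ne) _]
    · rw [setIntegral_const]
      simp only [smul_eq_mul, Measure.restrict_apply_univ, measureReal_def, ← hv]
      field_simp
    · have : Continuous (fun z : EuclideanSpace ℝ (Fin d) => φ (x + z)) :=
        hφ.continuous.comp (continuous_const.add continuous_id)
      exact (this.continuousOn.integrableOn_compact (isCompact_closedBall _ _)).mono_set
        ball_subset_closedBall
  -- Jensen
  haveI : IsFiniteMeasure (volume.restrict (ball (0 : EuclideanSpace ℝ (Fin d)) R')) :=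
    ⟨by rw [Measure.restrict_apply_univ]; exact hvolfin⟩
  haveI : NeZero (volume.restrict (ball (0 : EuclideanSpace ℝ (Fin d)) R')) :=
    ⟨by rw [ne_eq, Measure.restrict_eq_zero]; exact hvolpos.ne'⟩
  have hconv : ConvexOn ℝ univ (fun y : ℝ => y^2) := Even.convexOn_pow even_two
  have hJ : (⨍ z in ball (0 : EuclideanSpace ℝ (Fin d)) R', F z)^2
      ≤ ⨍ z in ball (0 : EuclideanSpace ℝ (Fin d)) R', (F z)^2 :=
    hconv.map_average_le (continuous_pow 2).continuousOn isClosed_univ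
      (Filter.Eventually.of_forall fun _ => mem_univ _) hFint hF2int
  -- pass to lintegral
  have hF2nn : ∀ z, 0 ≤ (F z)^2 := fun z => sq_nonneg _
  calc ENNReal.ofReal ((φ x - ⨍ y in ball x R', φ y)^2)
      ≤ ENNReal.ofReal (⨍ z in ball (0 : EuclideanSpace ℝ (Fin d)) R', (F z)^2) := by
        apply ENNReal.ofReal_le_ofReal
        rw [havg]; exact hJ
    _ = v⁻¹ * ∫⁻ z in ball (0 : EuclideanSpace ℝ (Fin d)) R', ENNReal.ofReal ((F z)^2) := by
        rw [setAverage_eq, smul_eq_mul,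
          ENNReal.ofReal_mul (by positivity),
          ofReal_integral_eq_lintegral_ofReal hF2int (Filter.Eventually.of_forall hF2nn)]
        congr 1
        rw [measureReal_def, ← ENNReal.toReal_inv, ENNReal.ofReal_toReal]
        simp [(measure_ball_pos volume (0 : EuclideanSpace ℝ (Fin d)) hR').ne']
    _ ≤ v⁻¹ * ∫⁻ z in ball (0 : EuclideanSpace ℝ (Fin d)) R',
          ENNReal.ofReal (R'^2) *
            ∫⁻ t in Ioo (0:ℝ) 1, ENNReal.ofReal (‖gradient φ (x + t • z)‖^2) := by
        apply mul_le_mul_right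
        apply setLIntegral_mono' measurableSet_ball
        intro z hz
        have h1 : ENNReal.ofReal ((F z)^2) = ENNReal.ofReal ((φ (x + z) - φ x)^2) := by
          congr 1
          rw [hF]
          ring
        rw [h1]
        refine le_trans (hpt z) ?_
        apply mul_le_mul_left
        apply ENNReal.ofReal_le_ofReal
        have hzn : ‖z‖ ≤ R' := by
          have := mem_ball.1 hz
          rw [dist_zero_right] at this
          exact this.le
        calc ‖z‖^2 ≤ R'^2 := pow_le_pow_left₀ (norm_nonneg z) hzn 2
          _ = R'^2 := rfl
    _ = (volume (ball (0 : EuclideanSpace ℝ (Fin d)) R'))⁻¹ * ENNReal.ofReal (R'^2) *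
          ∫⁻ z in ball (0 : EuclideanSpace ℝ (Fin d)) R',
            ∫⁻ t in Ioo (0:ℝ) 1, ENNReal.ofReal (‖gradient φ (x + t • z)‖^2) := by
        rw [lintegral_const_mul' _ _ ENNReal.ofReal_ne_top, ← hv, mul_assoc]

open Metric Set ENNReal in
private lemma stmt18_main_lin (d : ℕ) (φ : EuclideanSpace ℝ (Fin d) → ℝ) (hφ : Differentiable ℝ φ)
    (R R' : ℝ) (hR' : 0 < R') (hR : R' ≤ R)
    (hshift : ∀ v : EuclideanSpace ℝ (Fin d), ‖v‖ ≤ R →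
      ∫⁻ x in ball (0 : EuclideanSpace ℝ (Fin d)) R, ENNReal.ofReal (‖gradient φ (x + v)‖^2) ≤
        ∫⁻ x in ball (0 : EuclideanSpace ℝ (Fin d)) (2*R), ENNReal.ofReal (‖gradient φ x‖^2))
    (hcore : ∫⁻ x in ball (0 : EuclideanSpace ℝ (Fin d)) R,
        ∫⁻ z in ball (0 : EuclideanSpace ℝ (Fin d)) R',
        ∫⁻ t in Ioo (0:ℝ) 1, ENNReal.ofReal (‖gradient φ (x + t • z)‖^2) ≤
      volume (ball (0 : EuclideanSpace ℝ (Fin d)) R') *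
        ∫⁻ x in ball (0 : EuclideanSpace ℝ (Fin d)) (2*R), ENNReal.ofReal (‖gradient φ x‖^2))
    (hxstep : ∀ x : EuclideanSpace ℝ (Fin d),
      ENNReal.ofReal ((φ x - ⨍ y in ball x R', φ y)^2) ≤
        (volume (ball (0 : EuclideanSpace ℝ (Fin d)) R'))⁻¹ * ENNReal.ofReal (R'^2) *
          ∫⁻ z in ball (0 : EuclideanSpace ℝ (Fin d)) R',
            ∫⁻ t in Ioo (0:ℝ) 1, ENNReal.ofReal (‖gradient φ (x + t • z)‖^2)) :
    ∫⁻ x in ball (0 : EuclideanSpace ℝ (Fin d)) R,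
        ENNReal.ofReal ((φ x - ⨍ y in ball x R', φ y)^2) ≤
      ENNReal.ofReal (R'^2) *
        ∫⁻ x in ball (0 : EuclideanSpace ℝ (Fin d)) (2*R),
          ENNReal.ofReal (‖gradient φ x‖^2) := by
  have hvolpos : 0 < volume (ball (0 : EuclideanSpace ℝ (Fin d)) R') :=
    measure_ball_pos _ _ hR'
  have hvolfin : volume (ball (0 : EuclideanSpace ℝ (Fin d)) R') < ⊤ := measure_ball_lt_top
  set v := volume (ball (0 : EuclideanSpace ℝ (Fin d)) R') with hv
  set I := ∫⁻ x in ball (0 : EuclideanSpace ℝ (Fin d)) (2*R),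
    ENNReal.ofReal (‖gradient φ x‖^2) with hI
  have hcne : v⁻¹ * ENNReal.ofReal (R'^2) ≠ ⊤ :=
    ENNReal.mul_ne_top (ENNReal.inv_ne_top.2 hvolpos.ne') ENNReal.ofReal_ne_top
  calc ∫⁻ x in ball (0 : EuclideanSpace ℝ (Fin d)) R,
        ENNReal.ofReal ((φ x - ⨍ y in ball x R', φ y)^2)
      ≤ ∫⁻ x in ball (0 : EuclideanSpace ℝ (Fin d)) R,
          v⁻¹ * ENNReal.ofReal (R'^2) *
            ∫⁻ z in ball (0 : EuclideanSpace ℝ (Fin d)) R',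
              ∫⁻ t in Ioo (0:ℝ) 1, ENNReal.ofReal (‖gradient φ (x + t • z)‖^2) :=
        lintegral_mono fun x => hxstep x
    _ = v⁻¹ * ENNReal.ofReal (R'^2) *
          ∫⁻ x in ball (0 : EuclideanSpace ℝ (Fin d)) R,
            ∫⁻ z in ball (0 : EuclideanSpace ℝ (Fin d)) R',
              ∫⁻ t in Ioo (0:ℝ) 1, ENNReal.ofReal (‖gradient φ (x + t • z)‖^2) :=
        lintegral_const_mul' _ _ hcne
    _ ≤ v⁻¹ * ENNReal.ofReal (R'^2) * (v * I) := mul_le_mul_right hcore _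
    _ = (v⁻¹ * v) * (ENNReal.ofReal (R'^2) * I) := by ring
    _ = ENNReal.ofReal (R'^2) * I := by
        rw [ENNReal.inv_mul_cancel hvolpos.ne' hvolfin.ne, one_mul]


open Metric Set ENNReal in
/-- Poincaré-type mollification estimate: with `(φ)_{R'}(x) = ⨍_{B_{R'}(x)} φ`,
`(1/R²) ⨍_{B_R} |φ − (φ)_{R'}|² ≤ C(d) (R'/R)² ⨍_{B_{2R}} |∇φ|²`. -/
theorem stmt18 (d : ℕ) (hd : 0 < d) :
    ∃ C : ℝ, 0 < C ∧
      ∀ (R R' : ℝ) (φ : EuclideanSpace ℝ (Fin d) → ℝ),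
        0 < R' → R' ≤ R → Differentiable ℝ φ →
        IntegrableOn (fun x => ‖gradient φ x‖ ^ 2)
          (Metric.ball (0 : EuclideanSpace ℝ (Fin d)) (2 * R)) →
        (1 / R ^ 2) * (⨍ x in Metric.ball (0 : EuclideanSpace ℝ (Fin d)) R,
            (φ x - ⨍ y in Metric.ball x R', φ y) ^ 2) ≤
          C * (R' / R) ^ 2 *
            ⨍ x in Metric.ball (0 : EuclideanSpace ℝ (Fin d)) (2 * R), ‖gradient φ x‖ ^ 2 := by
  refine ⟨2^d, by positivity, ?_⟩
  intro R R' φ hR' hR hφ hint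
  have hRpos : 0 < R := lt_of_lt_of_le hR' hR
  haveI : Nontrivial (EuclideanSpace ℝ (Fin d)) := by
    apply Module.nontrivial_of_finrank_pos (R := ℝ)
    rw [finrank_euclideanSpace_fin]
    exact hd
  set f : EuclideanSpace ℝ (Fin d) → ℝ≥0∞ := fun p => ENNReal.ofReal (‖gradient φ p‖^2)
    with hfdef
  have hfmeas : Measurable f :=
    (((stmt18_grad_meas d φ).norm).pow_const 2).ennreal_ofReal
  set I := ∫⁻ x in ball (0 : EuclideanSpace ℝ (Fin d)) (2*R), f x with hIdef
  have hIfin : I < ⊤ := hint.lintegral_lt_top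
  set L := ∫⁻ x in ball (0 : EuclideanSpace ℝ (Fin d)) R,
    ENNReal.ofReal ((φ x - ⨍ y in ball x R', φ y)^2) with hLdef
  have hmain : L ≤ ENNReal.ofReal (R'^2) * I :=
    stmt18_main_lin d φ hφ R R' hR' hR
      (fun v hv => stmt18_shift_le d f hfmeas R v hv)
      (stmt18_core d f hfmeas R R' hR' hR (fun v hv => stmt18_shift_le d f hfmeas R v hv))
      (fun x => stmt18_xstep d φ hφ R' hR' x (fun z => stmt18_ptwise d φ hφ x z))
  -- measurability of the left-hand integrand
  have havg_eq : (fun x : EuclideanSpace ℝ (Fin d) => ⨍ y in ball x R', φ y)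
      = fun x => (volume (ball (0 : EuclideanSpace ℝ (Fin d)) R')).toReal⁻¹ *
          ∫ z in ball (0 : EuclideanSpace ℝ (Fin d)) R', φ (x + z) := by
    funext x
    rw [setAverage_eq, measureReal_def, Measure.addHaar_ball_center, stmt18_trans_int d φ R' x, smul_eq_mul]
  have h1 : StronglyMeasurable (fun x : EuclideanSpace ℝ (Fin d) =>
      ∫ z in ball (0 : EuclideanSpace ℝ (Fin d)) R', φ (x + z)) := by
    have hc : Continuous (fun p : EuclideanSpace ℝ (Fin d) × EuclideanSpace ℝ (Fin d) =>
        φ (p.1 + p.2)) := hφ.continuous.comp (continuous_fst.add continuous_snd)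
    exact hc.stronglyMeasurable.integral_prod_right'
  have hm : Measurable (fun x : EuclideanSpace ℝ (Fin d) =>
      (φ x - ⨍ y in ball x R', φ y)^2) := by
    apply Measurable.pow_const
    apply Measurable.sub hφ.continuous.measurable
    rw [havg_eq]
    exact measurable_const.mul h1.measurable
  have hLHS : ∫ x in ball (0 : EuclideanSpace ℝ (Fin d)) R,
      (φ x - ⨍ y in ball x R', φ y)^2 = L.toReal := by
    rw [hLdef, integral_eq_lintegral_of_nonneg_ae
      (Filter.Eventually.of_forall fun x => sq_nonneg _) hm.aestronglyMeasurable]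
  have hRHS : ∫ x in ball (0 : EuclideanSpace ℝ (Fin d)) (2*R), ‖gradient φ x‖^2 = I.toReal := by
    rw [hIdef, integral_eq_lintegral_of_nonneg_ae
      (Filter.Eventually.of_forall fun x => by positivity) hint.aestronglyMeasurable]
  -- volumes
  set a := (volume (ball (0 : EuclideanSpace ℝ (Fin d)) R)).toReal with hadef
  set b := (volume (ball (0 : EuclideanSpace ℝ (Fin d)) (2*R))).toReal with hbdef
  have ha : 0 < a :=
    ENNReal.toReal_pos (measure_ball_pos _ _ hRpos).ne' measure_ball_lt_top.ne
  have hball2 : volume (ball (0 : EuclideanSpace ℝ (Fin d)) (2*R))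
      = ENNReal.ofReal (2^d) * volume (ball (0 : EuclideanSpace ℝ (Fin d)) R) := by
    rw [Measure.addHaar_ball _ _ (by positivity : (0:ℝ) ≤ 2*R),
      Measure.addHaar_ball _ _ hRpos.le, finrank_euclideanSpace_fin,
      show ((2*R)^d : ℝ) = 2^d * R^d by rw [mul_pow],
      ENNReal.ofReal_mul (by positivity)]
    ring
  have hb : b = 2^d * a := by
    rw [hbdef, hball2, ENNReal.toReal_mul, ENNReal.toReal_ofReal (by positivity), hadef]
  have hLr : L.toReal ≤ R'^2 * I.toReal := by
    have h2 : (ENNReal.ofReal (R'^2) * I).toReal = R'^2 * I.toReal := by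
      rw [ENNReal.toReal_mul, ENNReal.toReal_ofReal (sq_nonneg _)]
    rw [← h2]
    exact ENNReal.toReal_mono (ENNReal.mul_ne_top ENNReal.ofReal_ne_top hIfin.ne) hmain
  rw [setAverage_eq, setAverage_eq, smul_eq_mul, smul_eq_mul, measureReal_def, measureReal_def, hLHS, hRHS, ← hadef, ← hbdef]
  have hIr : (0:ℝ) ≤ I.toReal := ENNReal.toReal_nonneg
  have heq : (2:ℝ)^d * (R'/R)^2 * (b⁻¹ * I.toReal) = 1/R^2 * (a⁻¹ * (R'^2 * I.toReal)) := by
    rw [hb]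
    field_simp
  rw [heq]
  apply mul_le_mul_of_nonneg_left _ (by positivity : (0:ℝ) ≤ 1/R^2)
  exact mul_le_mul_of_nonneg_left hLr (by positivity)
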